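/- For all cardinals α, β with 2 ≤ α, β ≤ ℵ₀, the class of (α,β)-representable posets is elementary: there exists a set T of sentences of the first-order language of orders such that for every poset P (regarded as a structure for this language, interpreting the relation symbol as its order), P is a model of T if and only if P is (α,β)-representable. -/

import Mathlib

open Cardinal

universe u

/-- A poset `P` is `(α,β)`-representable if there is a set `X` and a map `h : P → Set X`
which is an order-embedding, sends existing infima of sets of cardinality `< α` to
intersections, and existing suprema of sets of cardinality `< β` to unions. -/
def IsABRepresentable (α β : Cardinal.{u}) (P : Type u) [PartialOrder P] : Prop :=
  ∃ (X : Type u) (h : P → Set X),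
    (∀ p q : P, p ≤ q ↔ h p ⊆ h q) ∧
    (∀ (S : Set P) (m : P), #S < α → IsGLB S m → h m = ⋂ s ∈ S, h s) ∧
    (∀ (T : Set P) (j : P), #T < β → IsLUB T j → h j = ⋃ t ∈ T, h t)

section RepAuxSection

set_option linter.unusedSectionVars false

open FirstOrder FirstOrder.Language FirstOrder.Language.Structure

namespace FirstOrder.Language
namespace RepAux


noncomputable def bIInf {L : Language.{u,v}} {α : Type*} {n : ℕ} {β : Type*} (s : Finset β)
    (f : β → L.BoundedFormula α n) : L.BoundedFormula α n :=
  BoundedFormula.iInf fun b : s => f b.1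

noncomputable def bISup {L : Language.{u,v}} {α : Type*} {n : ℕ} {β : Type*} (s : Finset β)
    (f : β → L.BoundedFormula α n) : L.BoundedFormula α n :=
  BoundedFormula.iSup fun b : s => f b.1

noncomputable def oIAlls {L : Language.{u,v}} {α β γ : Type*} [Finite γ] (f : α → β ⊕ γ)
    (φ : L.Formula α) : L.Formula β :=
  Formula.iAlls γ (φ.relabel f)

noncomputable def oIExs {L : Language.{u,v}} {α β γ : Type*} [Finite γ] (f : α → β ⊕ γ)
    (φ : L.Formula α) : L.Formula β :=
  Formula.iExs γ (φ.relabel f)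

lemma realize_oIAlls {L : Language.{u,v}} {M : Type*} [L.Structure M] {α β γ : Type*} [Finite γ]
    (f : α → β ⊕ γ) (φ : L.Formula α) (v : β → M) :
    (oIAlls f φ).Realize v ↔ ∀ i : γ → M, φ.Realize (fun a => Sum.elim v i (f a)) := by
  rw [oIAlls, Formula.realize_iAlls]; exact forall_congr' fun i => Formula.realize_relabel

lemma realize_oIExs {L : Language.{u,v}} {M : Type*} [L.Structure M] {α β γ : Type*} [Finite γ]
    (f : α → β ⊕ γ) (φ : L.Formula α) (v : β → M) :
    (oIExs f φ).Realize v ↔ ∃ i : γ → M, φ.Realize (fun a => Sum.elim v i (f a)) := by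
  rw [oIExs, Formula.realize_iExs]; exact exists_congr fun i => Formula.realize_relabel

@[simp] lemma realize_formula_iInf {L : Language.{u,v}} {M : Type*} [L.Structure M] {α : Type*}
    {β : Type*} (s : Finset β) (f : β → L.Formula α) (v : α → M) :
    Formula.Realize (bIInf s f) v ↔ ∀ b ∈ s, Formula.Realize (f b) v :=
  by simp [bIInf, Formula.Realize]

@[simp] lemma realize_formula_iSup {L : Language.{u,v}} {M : Type*} [L.Structure M] {α : Type*}
    {β : Type*} (s : Finset β) (f : β → L.Formula α) (v : α → M) :
    Formula.Realize (bISup s f) v ↔ ∃ b ∈ s, Formula.Realize (f b) v :=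
  by simp [bISup, Formula.Realize]

variable {L : Language.{u, v}} [L.IsOrdered]

/-- `a ≤ b` as a formula with named variables. -/
def leF {α : Type w} (a b : α) : L.Formula α :=
  Term.le (Term.var (Sum.inl a)) (Term.var (Sum.inl b))

/-- `F a` as a formula with named variables. -/
def memF (fs : L.Relations 1) {α : Type w} (a : α) : L.Formula α :=
  fs.boundedFormula₁ (Term.var (Sum.inl a))

variable {M : Type*} [L.Structure M]

@[simp] lemma realize_memF (fs : L.Relations 1) {α : Type w} (a : α) (v : α → M) :
    (memF fs a).Realize v ↔ RelMap fs ![v a] := by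
  simp [memF, Formula.Realize, BoundedFormula.realize_rel₁]

@[simp] lemma realize_leF [LE M] [L.OrderedStructure M] {α : Type w} (a b : α) (v : α → M) :
    (leF (L := L) a b).Realize v ↔ v a ≤ v b := by
  simp [leF, Formula.Realize]

/-- glb formula : variables `Sum.inl i` are the tuple, `Sum.inr ()` the glb. -/
noncomputable def glbF (n : ℕ) : L.Formula (Fin n ⊕ Unit) :=
  (bIInf Finset.univ fun i : Fin n => leF (Sum.inr ()) (Sum.inl i)) ⊓
    oIAlls (id : (Fin n ⊕ Unit) ⊕ Unit → (Fin n ⊕ Unit) ⊕ Unit)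
      ((bIInf Finset.univ fun i : Fin n =>
          leF (Sum.inr ()) (Sum.inl (Sum.inl i))) ⟹ leF (Sum.inr ()) (Sum.inl (Sum.inr ())))

noncomputable def lubF (n : ℕ) : L.Formula (Fin n ⊕ Unit) :=
  (bIInf Finset.univ fun i : Fin n => leF (Sum.inl i) (Sum.inr ())) ⊓
    oIAlls (id : (Fin n ⊕ Unit) ⊕ Unit → (Fin n ⊕ Unit) ⊕ Unit)
      ((bIInf Finset.univ fun i : Fin n =>
          leF (Sum.inl (Sum.inl i)) (Sum.inr ())) ⟹ leF (Sum.inl (Sum.inr ())) (Sum.inr ()))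

lemma realize_glbF [Preorder M] [L.OrderedStructure M] (n : ℕ) (w : Fin n ⊕ Unit → M) :
    (glbF (L := L) n).Realize w ↔ IsGLB (Set.range (w ∘ Sum.inl)) (w (Sum.inr ())) := by
  simp only [glbF, Formula.realize_inf, realize_formula_iInf, Finset.mem_univ,
    forall_true_left, realize_leF, realize_oIAlls, Formula.realize_imp, true_implies]
  constructor
  · rintro ⟨h1, h2⟩
    constructor
    · rintro x ⟨i, rfl⟩; exact h1 i
    · rintro b hb
      have := h2 (fun _ => b)
      simp only [Sum.elim_inl, Sum.elim_inr, id_eq] at this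
      exact this fun i => hb ⟨i, rfl⟩
  · rintro ⟨h1, h2⟩
    refine ⟨fun i => h1 ⟨i, rfl⟩, fun b hb => ?_⟩
    simp only [Sum.elim_inl, Sum.elim_inr, id_eq] at hb ⊢
    exact h2 fun x ⟨i, hi⟩ => hi ▸ hb i

lemma realize_lubF [Preorder M] [L.OrderedStructure M] (n : ℕ) (w : Fin n ⊕ Unit → M) :
    (lubF (L := L) n).Realize w ↔ IsLUB (Set.range (w ∘ Sum.inl)) (w (Sum.inr ())) := by
  simp only [lubF, Formula.realize_inf, realize_formula_iInf, Finset.mem_univ,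
    forall_true_left, realize_leF, realize_oIAlls, Formula.realize_imp, true_implies]
  constructor
  · rintro ⟨h1, h2⟩
    constructor
    · rintro x ⟨i, rfl⟩; exact h1 i
    · rintro b hb
      have := h2 (fun _ => b)
      simp only [Sum.elim_inl, Sum.elim_inr, id_eq] at this
      exact this fun i => hb ⟨i, rfl⟩
  · rintro ⟨h1, h2⟩
    refine ⟨fun i => h1 ⟨i, rfl⟩, fun b hb => ?_⟩
    simp only [Sum.elim_inl, Sum.elim_inr, id_eq] at hb ⊢
    exact h2 fun x ⟨i, hi⟩ => hi ▸ hb i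


/-- Sentence: F is an up-set. -/
noncomputable def upsetSen (fs : L.Relations 1) : L.Sentence :=
  oIAlls (Sum.inr : Fin 2 → Empty ⊕ Fin 2)
    ((memF fs 0 ⊓ leF 0 1) ⟹ memF fs 1)

/-- Sentence: F is closed under glbs of `n`-tuples. -/
noncomputable def meetSen (fs : L.Relations 1) (n : ℕ) : L.Sentence :=
  oIAlls (Sum.inr : Fin n ⊕ Unit → Empty ⊕ (Fin n ⊕ Unit))
    ((glbF n ⊓ bIInf Finset.univ fun i : Fin n => memF fs (Sum.inl i)) ⟹
      memF fs (Sum.inr ()))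

/-- Sentence: F is prime w.r.t. lubs of `n`-tuples. -/
noncomputable def joinSen (fs : L.Relations 1) (n : ℕ) : L.Sentence :=
  oIAlls (Sum.inr : Fin n ⊕ Unit → Empty ⊕ (Fin n ⊕ Unit))
    ((lubF n ⊓ memF fs (Sum.inr ())) ⟹
      bISup Finset.univ fun i : Fin n => memF fs (Sum.inl i))

def memConSen (fs : L.Relations 1) (c : L.Constants) : L.Sentence :=
  fs.boundedFormula₁ c.term

def notLeConSen (c d : L.Constants) : L.Sentence :=
  ∼(Term.le (c.term : L.Term (Empty ⊕ Fin 0)) d.term)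

section Realize

variable {M : Type*} [L.Structure M] (fs : L.Relations 1)

lemma realize_upsetSen [LE M] [L.OrderedStructure M] :
    M ⊨ upsetSen fs ↔ ∀ x y : M, RelMap fs ![x] → x ≤ y → RelMap fs ![y] := by
  simp only [upsetSen, Sentence.Realize, realize_oIAlls, Formula.realize_imp,
    Formula.realize_inf, realize_memF, realize_leF, Sum.elim_inr]
  constructor
  · intro h x y hx hxy
    have := h ![x, y]
    simpa using this ⟨by simpa using hx, by simpa using hxy⟩
  · rintro h i ⟨h1, h2⟩
    exact h _ _ h1 h2

lemma range_elim_comp_inl {γ : Type*} {n : ℕ} (s : Fin n → γ) (m : γ) :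
    Set.range ((Sum.elim s fun _ : Unit => m) ∘ Sum.inl) = Set.range s := by
  ext x; simp [Function.comp]

lemma realize_meetSen [Preorder M] [L.OrderedStructure M] (n : ℕ) :
    M ⊨ meetSen fs n ↔ ∀ (s : Fin n → M) (m : M), IsGLB (Set.range s) m →
      (∀ i, RelMap fs ![s i]) → RelMap fs ![m] := by
  simp only [meetSen, Sentence.Realize, realize_oIAlls, Formula.realize_imp,
    Formula.realize_inf, realize_formula_iInf, Finset.mem_univ, forall_true_left,
    realize_memF, Sum.elim_inr]
  constructor
  · intro h s m hglb hmem
    have := h (Sum.elim s fun _ => m)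
    rw [realize_glbF, range_elim_comp_inl] at this
    simp only [Sum.elim_inl, Sum.elim_inr] at this
    exact this ⟨hglb, fun i => hmem i⟩
  · rintro h i ⟨h1, h2⟩
    rw [realize_glbF] at h1
    exact h (fun j => (i ∘ Sum.inl) j) _ h1 h2

lemma realize_joinSen [Preorder M] [L.OrderedStructure M] (n : ℕ) :
    M ⊨ joinSen fs n ↔ ∀ (t : Fin n → M) (j : M), IsLUB (Set.range t) j →
      RelMap fs ![j] → ∃ i, RelMap fs ![t i] := by
  simp only [joinSen, Sentence.Realize, realize_oIAlls, Formula.realize_imp,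
    Formula.realize_inf, realize_formula_iSup, Finset.mem_univ, true_and, exists_prop,
    realize_memF, Sum.elim_inr]
  constructor
  · intro h t j hlub hmem
    have := h (Sum.elim t fun _ => j)
    rw [realize_lubF, range_elim_comp_inl] at this
    simp only [Sum.elim_inl, Sum.elim_inr] at this
    obtain ⟨i, hi⟩ := this ⟨hlub, hmem⟩
    exact ⟨i, by simpa using hi⟩
  · rintro h i ⟨h1, h2⟩
    rw [realize_lubF] at h1
    obtain ⟨i', hi'⟩ := h (fun j => (i ∘ Sum.inl) j) _ h1 h2
    exact ⟨i', hi'⟩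

lemma realize_memConSen (c : L.Constants) :
    M ⊨ memConSen fs c ↔ RelMap fs ![(c : M)] := by
  simp [memConSen, Sentence.Realize, Formula.Realize, BoundedFormula.realize_rel₁]

lemma realize_notLeConSen [LE M] [L.OrderedStructure M] (c d : L.Constants) :
    M ⊨ notLeConSen (L := L) c d ↔ ¬ (c : M) ≤ (d : M) := by
  simp [notLeConSen, Sentence.Realize, Formula.Realize]

end Realize


end RepAux
end FirstOrder.Language

namespace RepAux2
open FirstOrder Language Structure Cardinal

universe x

/-- A separating `(α,β)`-filter. -/
def IsSepFilter (α β : Cardinal.{x}) (P : Type x) [PartialOrder P] (F : Set P) : Prop :=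
  (∀ a b : P, a ∈ F → a ≤ b → b ∈ F) ∧
  (∀ (S : Set P) (m : P), #S < α → IsGLB S m → S ⊆ F → m ∈ F) ∧
  (∀ (T : Set P) (j : P), #T < β → IsLUB T j → j ∈ F → ∃ t ∈ T, t ∈ F)

theorem isABRepresentable_iff_filters (α β : Cardinal.{x}) (P : Type x) [PartialOrder P] :
    IsABRepresentable α β P ↔
      ∀ p q : P, ¬ p ≤ q → ∃ F : Set P, IsSepFilter α β P F ∧ p ∈ F ∧ q ∉ F := by
  constructor
  · rintro ⟨X, h, hemb, hmeet, hjoin⟩ p q hpq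
    have hsub : ¬ h p ⊆ h q := fun hs => hpq ((hemb p q).2 hs)
    obtain ⟨x, hxp, hxq⟩ := Set.not_subset.1 hsub
    refine ⟨{r | x ∈ h r}, ⟨?_, ?_, ?_⟩, hxp, hxq⟩
    · intro a b ha hab
      exact (hemb a b).1 hab ha
    · intro S m hS hglb hSF
      have := hmeet S m hS hglb
      simp only [Set.mem_setOf_eq, this, Set.mem_iInter]
      exact fun s hs => hSF hs
    · intro T j hT hlub hj
      have := hjoin T j hT hlub
      rw [Set.mem_setOf_eq, this] at hj
      simpa using hj
  · intro hfil
    refine ⟨{F : Set P // IsSepFilter α β P F}, fun p => {F | p ∈ F.1}, ?_, ?_, ?_⟩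
    · intro p q
      constructor
      · intro hpq F hF
        exact F.2.1 p q hF hpq
      · intro hsub
        by_contra hpq
        obtain ⟨F, hF, hp, hq⟩ := hfil p q hpq
        exact hq (hsub (show (⟨F, hF⟩ : {F : Set P // IsSepFilter α β P F}) ∈
          {G : {F : Set P // IsSepFilter α β P F} | p ∈ G.1} from hp))
    · intro S m hS hglb
      ext F
      simp only [Set.mem_setOf_eq, Set.mem_iInter]
      constructor
      · intro hm s hs
        exact F.2.1 m s hm (hglb.1 hs)
      · intro hall
        exact F.2.2.1 S m hS hglb fun s hs => hall s hs
    · intro T j hT hlub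
      ext F
      simp only [Set.mem_setOf_eq, Set.mem_iUnion]
      constructor
      · intro hj
        obtain ⟨t, ht, htF⟩ := F.2.2.2 T j hT hlub hj
        exact ⟨t, ht, htF⟩
      · rintro ⟨t, ht, htF⟩
        exact F.2.1 t j htF (hlub.1 ht)

/-- Enumerate a small set by a finite tuple. -/
theorem exists_enum {α : Cardinal.{x}} (hαω : α ≤ ℵ₀) {P : Type x} {S : Set P} (hS : #S < α) :
    ∃ (n : ℕ) (s : Fin n → P), Set.range s = S ∧ (n : Cardinal.{x}) < α := by
  have hfin : S.Finite := by
    rw [← Cardinal.lt_aleph0_iff_set_finite]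
    exact hS.trans_le hαω
  haveI := hfin.fintype
  refine ⟨Fintype.card S, fun i => ((Fintype.equivFin S).symm i : P), ?_, ?_⟩
  · ext x
    constructor
    · rintro ⟨i, rfl⟩; exact ((Fintype.equivFin S).symm i).2
    · intro hx; exact ⟨Fintype.equivFin S ⟨x, hx⟩, by simp⟩
  · rwa [← Cardinal.mk_fintype S]

theorem mk_range_lt {α : Cardinal.{x}} {P : Type x} {n : ℕ} (s : Fin n → P)
    (hn : (n : Cardinal.{x}) < α) : #(Set.range s) < α := by
  refine lt_of_le_of_lt ?_ hn
  have : Set.range s = Set.range (s ∘ ULift.down.{x} (α := Fin n)) := by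
    ext x; constructor
    · rintro ⟨i, rfl⟩; exact ⟨⟨i⟩, rfl⟩
    · rintro ⟨i, rfl⟩; exact ⟨i.down, rfl⟩
  rw [this]
  refine (Cardinal.mk_range_le).trans_eq ?_
  simp

end RepAux2


namespace RepMain
open FirstOrder Language Structure Cardinal RepAux2 FirstOrder.Language.RepAux

/-- The language with one extra unary predicate `F`. -/
inductive fRel : ℕ → Type | f : fRel 1

def Lf : Language := ⟨fun _ => Empty, fRel⟩

def L2 : Language := Language.order.sum Lf

instance : IsOrdered L2 := ⟨Sum.inl IsOrdered.leSymb⟩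

def fSymb : L2.Relations 1 := Sum.inr fRel.f

instance {M : Type u} : IsOrdered (L2[[M]]) := ⟨Sum.inl IsOrdered.leSymb⟩

def fs (M : Type u) : (L2[[M]]).Relations 1 := Sum.inl fSymb

def ψ (M : Type u) : Language.order[[M]] →ᴸ L2[[M]] :=
  LHom.sumMap LHom.sumInl (LHom.id _)

def lfStructure (P : Type u) (F₀ : Set P) : Lf.Structure P where
  funMap := fun {n} f => f.elim
  RelMap := fun {n} r x => match r with | fRel.f => x 0 ∈ F₀

/-- The theory of all `(α, β)`-representable posets in universe `u`. -/
def RepTheory (α β : Cardinal.{u}) : Language.order.Theory :=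
  {φ | ∀ (P : Type u) [PartialOrder P], IsABRepresentable α β P →
    @Sentence.Realize Language.order P (orderStructure P) φ}

/-- The filter axioms, with constants `p`, `q`. -/
noncomputable def axioms (α β : Cardinal.{u}) (M : Type u) (p q : M) : (L2[[M]]).Theory :=
  (L2[[M]]).partialOrderTheory ∪
    {upsetSen (fs M), memConSen (fs M) (L2.con p), (memConSen (fs M) (L2.con q)).not,
      notLeConSen (L2.con p) (L2.con q)} ∪
    (meetSen (fs M) '' {n : ℕ | (n : Cardinal.{u}) < α}) ∪
    (joinSen (fs M) '' {n : ℕ | (n : Cardinal.{u}) < β})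

section FinSat

variable (α β : Cardinal.{u}) (M : Type u) [PartialOrder M]
  [Language.order.Structure M] [Language.order.OrderedStructure M]

theorem finSat (hαω : α ≤ ℵ₀) (hβω : β ≤ ℵ₀) (p q : M) (hpq : ¬ p ≤ q)
    (hM : ∀ φ ∈ RepTheory α β, M ⊨ φ) :
    ((ψ M).onTheory (Language.order.elementaryDiagram M) ∪
      axioms α β M p q).IsFinitelySatisfiable := by
  classical
  intro T0 hT0
  set A : (L2[[M]]).Theory := (ψ M).onTheory (Language.order.elementaryDiagram M) with hA
  -- choose diagram sentences covering the diagram part of T0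
  have hchoice : ∀ σ ∈ (↑T0 : Set ((L2[[M]]).Sentence)) ∩ A,
      ∃ δ, δ ∈ Language.order.elementaryDiagram M ∧ (ψ M).onSentence δ = σ := by
    rintro σ ⟨-, hσA⟩
    exact LHom.mem_onTheory.1 hσA
  choose δf hδf1 hδf2 using hchoice
  have hfin : ((↑T0 : Set ((L2[[M]]).Sentence)) ∩ A).Finite :=
    T0.finite_toSet.inter_of_left A
  set D : Finset (Language.order[[M]].Sentence) :=
    hfin.toFinset.attach.image
      (fun σ => δf σ.1 (hfin.mem_toFinset.1 σ.2)) with hD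
  have hDdiag : ∀ δ ∈ D, δ ∈ Language.order.elementaryDiagram M := by
    intro δ hδ
    simp only [hD, Finset.mem_image, Finset.mem_attach, true_and, Subtype.exists] at hδ
    obtain ⟨σ, hσ, rfl⟩ := hδ
    exact hδf1 _ _
  have hDcover : ∀ σ ∈ (↑T0 : Set ((L2[[M]]).Sentence)) ∩ A,
      ∃ δ ∈ D, (ψ M).onSentence δ = σ := by
    intro σ hσ
    refine ⟨δf σ hσ, ?_, hδf2 σ hσ⟩
    simp only [hD, Finset.mem_image, Finset.mem_attach, true_and, Subtype.exists]
    exact ⟨σ, hfin.mem_toFinset.2 hσ, rfl⟩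
  -- the sentence asserting the existence of the needed configuration
  set χ : Language.order.Formula M :=
    (bIInf D (fun δ => Formula.equivSentence.symm δ)) ⊓ ∼(leF p q) with hχdef
  set V : Finset M := insert p (insert q χ.freeVarFinset) with hV
  have hpV : p ∈ (V : Set M) := by simp [hV]
  have hsub : ↑χ.freeVarFinset ⊆ (V : Set M) := by
    intro x hx; simp only [hV, Finset.coe_insert, Set.mem_insert_iff]; right; right; exact hx
  haveI : Finite ((V : Set M) : Type u) := (V.finite_toSet).to_subtype
  set χV : Language.order.Formula ((V : Set M) : Type u) :=
    χ.restrictFreeVar (Set.inclusion hsub) with hχV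
  set σS : Language.order.Sentence :=
    oIExs (Sum.inr : ((V : Set M) : Type u) → Empty ⊕ _) χV with hσS
  -- M satisfies σS
  have hχM : χ.Realize (id : M → M) := by
    rw [hχdef, Formula.realize_inf]
    constructor
    · rw [realize_formula_iInf]
      intro δ hδ
      have hd : M ⊨ δ := hDdiag δ hδ
      have := (Formula.realize_equivSentence_symm_con M δ).2 hd
      exact this
    · rw [Formula.realize_not, realize_leF]
      exact hpq
  have hMσ : M ⊨ σS := by
    rw [hσS, Sentence.Realize, realize_oIExs]
    refine ⟨fun x => (x : M), ?_⟩
    have h0 : χV.Realize ((id : M → M) ∘ ((↑) : ((V : Set M) : Type u) → M)) :=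
      (BoundedFormula.realize_restrictFreeVar' hsub).2 hχM
    exact h0
  -- find a representable poset satisfying σS
  have hnot : σS.not ∉ RepTheory α β := by
    intro h
    exact (hM _ h) hMσ
  obtain ⟨P₀, instP₀, hrep, hσP⟩ :
      ∃ (P₀ : Type u) (_ : PartialOrder P₀), IsABRepresentable α β P₀ ∧
        @Sentence.Realize Language.order P₀ (orderStructure P₀) σS := by
    by_contra hc
    push_neg at hc
    refine hnot fun P instP hrepP => ?_
    rw [Sentence.realize_not]
    exact hc P instP hrepP
  letI : PartialOrder P₀ := instP₀
  letI : Language.order.Structure P₀ := orderStructure P₀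
  haveI : Language.order.OrderedStructure P₀ := ⟨fun x => Iff.rfl⟩
  rw [Sentence.Realize, realize_oIExs] at hσP
  obtain ⟨w, hw⟩ := hσP
  set v : M → P₀ := fun m => if h : m ∈ (V : Set M) then w ⟨m, h⟩ else w ⟨p, hpV⟩ with hv
  have hveq : v ∘ ((↑) : ((V : Set M) : Type u) → M) = w := by
    funext x
    rcases x with ⟨m, hm⟩
    simp only [hv, Function.comp_apply, dif_pos hm]
  have hχP : χ.Realize v := by
    have h1 : χV.Realize (v ∘ ((↑) : ((V : Set M) : Type u) → M)) := by
      rw [hveq]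
      exact hw
    exact (BoundedFormula.realize_restrictFreeVar' (φ := χ) hsub (v := v) (xs := default)).1 h1
  rw [hχdef, Formula.realize_inf, Formula.realize_not, realize_leF] at hχP
  obtain ⟨hχ1, hχ2⟩ := hχP
  rw [realize_formula_iInf] at hχ1
  -- separating filter in P₀
  obtain ⟨F₀, hF₀, hpF₀, hqF₀⟩ :=
    (isABRepresentable_iff_filters α β P₀).1 hrep (v p) (v q) hχ2
  -- structures on P₀
  letI : Lf.Structure P₀ := lfStructure P₀ F₀
  letI : L2.Structure P₀ := Language.sumStructure _ _ _
  letI : (constantsOn M).Structure P₀ := constantsOn.structure v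
  letI : (L2[[M]]).Structure P₀ := Language.sumStructure _ _ _
  letI : (Language.order[[M]]).Structure P₀ := Language.sumStructure _ _ _
  haveI : (ψ M).IsExpansionOn P₀ :=
    ⟨fun {n} f x => by
      cases f with
      | inl f => exact isEmptyElim f
      | inr c => rfl,
     fun {n} R x => by
      cases R with
      | inl R => cases R; rfl
      | inr R => exact isEmptyElim R⟩
  haveI : Nonempty P₀ := ⟨v p⟩
  haveI : (L2[[M]]).OrderedStructure P₀ := ⟨fun x => Iff.rfl⟩
  have hRel : ∀ x : P₀, RelMap (fs M) ![x] ↔ x ∈ F₀ := fun x => Iff.rfl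
  have hmodel : P₀ ⊨ (↑T0 : (L2[[M]]).Theory) := by
    rw [Theory.model_iff]
    intro φ hφ
    rcases hT0 hφ with hφA | hφax
    · obtain ⟨δ, hδD, rfl⟩ := hDcover φ ⟨hφ, hφA⟩
      rw [LHom.realize_onSentence]
      have := hχ1 δ hδD
      rw [Formula.realize_equivSentence_symm] at this
      exact this
    · simp only [axioms, Set.mem_union, Set.mem_insert_iff, Set.mem_singleton_iff,
        Set.mem_image, Set.mem_setOf_eq] at hφax
      rcases hφax with ((hpo | (rfl | rfl | rfl | rfl)) | ⟨n, hn, rfl⟩) | ⟨n, hn, rfl⟩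
      · exact (Theory.model_iff _).1 inferInstance _ hpo
      · rw [realize_upsetSen]
        intro x y hx hxy
        rw [hRel] at *
        exact hF₀.1 x y hx hxy
      · rw [realize_memConSen]
        exact hpF₀
      · rw [Sentence.realize_not, realize_memConSen]
        exact hqF₀
      · rw [realize_notLeConSen]
        exact hχ2
      · rw [realize_meetSen]
        intro s m hglb hmem
        rw [hRel]
        exact hF₀.2.1 (Set.range s) m (mk_range_lt s hn) hglb
          (by rintro x ⟨i, rfl⟩; exact (hRel _).1 (hmem i))
      · rw [realize_joinSen]
        intro t j hlub hj
        obtain ⟨t', ⟨i, rfl⟩, hti⟩ := hF₀.2.2 (Set.range t) j (mk_range_lt t hn) hlub ((hRel _).1 hj)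
        exact ⟨i, (hRel _).2 hti⟩
  exact Theory.Model.isSatisfiable P₀

end FinSat

section Main

theorem main (α β : Cardinal.{u}) (hαω : α ≤ ℵ₀) (hβω : β ≤ ℵ₀) (M : Type u) [PartialOrder M]
    (hM : ∀ φ ∈ RepTheory α β, @Sentence.Realize Language.order M (orderStructure M) φ) :
    IsABRepresentable α β M := by
  classical
  letI : Language.order.Structure M := orderStructure M
  haveI : Language.order.OrderedStructure M := ⟨fun x => Iff.rfl⟩
  rw [isABRepresentable_iff_filters]
  intro p q hpq
  -- the big theory
  set Θ : (L2[[M]]).Theory :=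
    (ψ M).onTheory (Language.order.elementaryDiagram M) ∪ axioms α β M p q with hΘ
  have hSat : Θ.IsSatisfiable := by
    rw [Theory.isSatisfiable_iff_isFinitelySatisfiable]
    exact finSat α β M hαω hβω p q hpq hM
  obtain ⟨N⟩ := hSat
  haveI hNΘ : (N : Type _) ⊨ Θ := N.is_model
  -- reducts
  letI : (Language.order[[M]]).Structure N := (ψ M).reduct N
  haveI : (ψ M).IsExpansionOn N := LHom.isExpansionOn_reduct (ψ M) N
  letI : Language.order.Structure N := (Language.order.lhomWithConstants M).reduct N
  haveI : (Language.order.lhomWithConstants M).IsExpansionOn N :=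
    LHom.isExpansionOn_reduct _ N
  -- N models the elementary diagram
  haveI hdiag : (N : Type _) ⊨ Language.order.elementaryDiagram M := by
    rw [Theory.model_iff]
    intro δ hδ
    have h1 : (N : Type _) ⊨ (ψ M).onSentence δ :=
      Θ.realize_sentence_of_mem (Set.mem_union_left _ ⟨δ, hδ, rfl⟩)
    exact (LHom.realize_onSentence _ (ψ M) δ).1 h1
  -- the elementary embedding
  let g : M ↪ₑ[Language.order] N :=
    ElementaryEmbedding.ofModelsElementaryDiagram Language.order M N
  -- order on N
  haveI hpoN : (N : Type _) ⊨ (L2[[M]]).partialOrderTheory :=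
    Theory.Model.mono hNΘ (by
      intro φ hφ
      exact Set.mem_union_right _ (Set.mem_union_left _ (Set.mem_union_left _
        (Set.mem_union_left _ hφ))))
  letI : PartialOrder N := (L2[[M]]).partialOrderOfModels N
  haveI hOSN : (L2[[M]]).OrderedStructure N := by
    constructor
    intro x
    have hx : (![x 0, x 1] : Fin 2 → N) = x := by
      funext i
      fin_cases i <;> rfl
    rw [← hx]
    exact Iff.rfl
  haveI : Language.order.OrderedStructure N := by
    constructor
    intro x
    have : RelMap (leSymb : Language.order.Relations 2) x ↔
        RelMap (leSymb : (L2[[M]]).Relations 2) x := Iff.rfl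
    rw [this]
    exact relMap_leSymb x
  -- transfer of ≤ and glb/lub along g
  have hle : ∀ a b : M, a ≤ b → g a ≤ g b := by
    intro a b hab
    have := (g.map_formula (leF (L := Language.order) a b) (id : M → M))
    rw [realize_leF, realize_leF] at this
    exact this.2 hab
  have hglb : ∀ (n : ℕ) (s : Fin n → M) (m : M), IsGLB (Set.range s) m →
      IsGLB (Set.range (g ∘ s)) (g m) := by
    intro n s m h
    have h1 : (glbF (L := Language.order) n).Realize (Sum.elim s fun _ : Unit => m) := by
      rw [realize_glbF, range_elim_comp_inl]
      exact h
    have h2 := (g.map_formula (glbF (L := Language.order) n)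
      (Sum.elim s fun _ : Unit => m)).2 h1
    rw [show (g ∘ Sum.elim s fun _ : Unit => m) =
      (Sum.elim (g ∘ s) fun _ : Unit => g m) from by funext x; cases x <;> rfl] at h2
    rw [realize_glbF, range_elim_comp_inl] at h2
    exact h2
  have hlub : ∀ (n : ℕ) (t : Fin n → M) (j : M), IsLUB (Set.range t) j →
      IsLUB (Set.range (g ∘ t)) (g j) := by
    intro n t j h
    have h1 : (lubF (L := Language.order) n).Realize (Sum.elim t fun _ : Unit => j) := by
      rw [realize_lubF, range_elim_comp_inl]
      exact h
    have h2 := (g.map_formula (lubF (L := Language.order) n)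
      (Sum.elim t fun _ : Unit => j)).2 h1
    rw [show (g ∘ Sum.elim t fun _ : Unit => j) =
      (Sum.elim (g ∘ t) fun _ : Unit => g j) from by funext x; cases x <;> rfl] at h2
    rw [realize_lubF, range_elim_comp_inl] at h2
    exact h2
  -- the axioms hold in N
  have hup : (N : Type _) ⊨ upsetSen (fs M) :=
    Θ.realize_sentence_of_mem (Set.mem_union_right _ (Set.mem_union_left _
      (Set.mem_union_left _ (Set.mem_union_right _ (by simp)))))
  have hmemp : (N : Type _) ⊨ memConSen (fs M) (L2.con p) :=
    Θ.realize_sentence_of_mem (Set.mem_union_right _ (Set.mem_union_left _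
      (Set.mem_union_left _ (Set.mem_union_right _ (by simp)))))
  have hmemq : (N : Type _) ⊨ (memConSen (fs M) (L2.con q)).not :=
    Θ.realize_sentence_of_mem (Set.mem_union_right _ (Set.mem_union_left _
      (Set.mem_union_left _ (Set.mem_union_right _ (by simp)))))
  have hmeet : ∀ n : ℕ, (n : Cardinal.{u}) < α → (N : Type _) ⊨ meetSen (fs M) n := by
    intro n hn
    exact Θ.realize_sentence_of_mem (Set.mem_union_right _ (Set.mem_union_left _
      (Set.mem_union_right _ ⟨n, hn, rfl⟩)))
  have hjoin : ∀ n : ℕ, (n : Cardinal.{u}) < β → (N : Type _) ⊨ joinSen (fs M) n := by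
    intro n hn
    exact Θ.realize_sentence_of_mem (Set.mem_union_right _
      (Set.mem_union_right _ ⟨n, hn, rfl⟩))
  -- identify g with the constants
  have hgc : ∀ m : M, g m = ((L2.con m : (L2[[M]]).Constants) : N) := fun m => rfl
  -- the pulled-back filter
  refine ⟨{a : M | RelMap (fs M) ![g a]}, ⟨?_, ?_, ?_⟩, ?_, ?_⟩
  · -- upset
    intro a b ha hab
    rw [realize_upsetSen] at hup
    exact hup (g a) (g b) ha (hle a b hab)
  · -- meets
    intro S m hS hglbS hSsub
    obtain ⟨n, s, rfl, hn⟩ := exists_enum hαω hS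
    have := (realize_meetSen (fs M) n).1 (hmeet n hn) (g ∘ s) (g m) (hglb n s m hglbS)
      (fun i => hSsub ⟨i, rfl⟩)
    exact this
  · -- joins
    intro T j hT hlubT hj
    obtain ⟨n, t, rfl, hn⟩ := exists_enum hβω hT
    obtain ⟨i, hi⟩ := (realize_joinSen (fs M) n).1 (hjoin n hn) (g ∘ t) (g j)
      (hlub n t j hlubT) hj
    exact ⟨t i, ⟨i, rfl⟩, hi⟩
  · -- p in
    rw [Set.mem_setOf_eq, hgc p]
    exact (realize_memConSen (fs M) (L2.con p)).1 hmemp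
  · -- q not in
    rw [Set.mem_setOf_eq, hgc q]
    rw [Sentence.realize_not] at hmemq
    intro h
    exact hmemq ((realize_memConSen (fs M) (L2.con q)).2 h)

end Main

end RepMain

end RepAuxSection

/-- The class of `(α,β)`-representable posets is elementary: there is a set of sentences
in the first-order language of orders whose poset models are exactly the
`(α,β)`-representable posets. -/
theorem representable_isElementary (α β : Cardinal.{u})
    (hα2 : 2 ≤ α) (hαω : α ≤ ℵ₀) (hβ2 : 2 ≤ β) (hβω : β ≤ ℵ₀) :
    ∃ T : FirstOrder.Language.order.Theory,
      ∀ (P : Type u) [PartialOrder P],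
        ((∀ φ ∈ T, @FirstOrder.Language.Sentence.Realize FirstOrder.Language.order P
            (FirstOrder.Language.orderStructure P) φ) ↔ IsABRepresentable α β P) := by
  refine ⟨RepMain.RepTheory α β, fun P _ => ⟨fun h => RepMain.main α β hαω hβω P h,
    fun hrep φ hφ => hφ P hrep⟩⟩
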